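/- Let p and q be distinct primes, let α, β be positive integers, let ε be a natural number with β > ε, and set n = p^α·q^β and m = p^{α+ε}·q^{β−ε}. Then H(m) − H(n) ≤ (α·log α + β·log β)/(α + β) − log((α + β)/2). -/

import Mathlib

/-- The entropy of a positive integer `n ≥ 2` with prime factorization
`n = p_1^{α_1} ⋯ p_r^{α_r}`: `H(n) = log Ω(n) − (1/Ω(n)) ∑ α_i log α_i`,
where `Ω(n)` counts prime factors with multiplicity. -/
noncomputable def numEntropy (n : ℕ) : ℝ :=
  Real.log (n.primeFactorsList.length : ℝ) -
    (1 / (n.primeFactorsList.length : ℝ)) *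
      ∑ p ∈ n.primeFactors, (n.factorization p : ℝ) * Real.log (n.factorization p)

lemma numEntropy_prime_pow_mul (p q a b : ℕ) (hp : p.Prime) (hq : q.Prime) (hpq : p ≠ q)
    (ha : 0 < a) (hb : 0 < b) :
    numEntropy (p ^ a * q ^ b) =
      Real.log ((a : ℝ) + b) -
        (1 / ((a : ℝ) + b)) * ((a : ℝ) * Real.log a + (b : ℝ) * Real.log b) := by
  have hpa : (p ^ a : ℕ) ≠ 0 := pow_ne_zero _ hp.pos.ne'
  have hqb : (q ^ b : ℕ) ≠ 0 := pow_ne_zero _ hq.pos.ne'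
  have hlen : ((p ^ a * q ^ b).primeFactorsList).length = a + b := by
    rw [(Nat.perm_primeFactorsList_mul hpa hqb).length_eq, List.length_append,
      hp.primeFactorsList_pow, hq.primeFactorsList_pow, List.length_replicate,
      List.length_replicate]
  have hpf : (p ^ a * q ^ b).primeFactors = {p, q} := by
    rw [Nat.primeFactors_mul hpa hqb, Nat.primeFactors_prime_pow ha.ne' hp,
      Nat.primeFactors_prime_pow hb.ne' hq]
    rfl
  have hfact : (p ^ a * q ^ b).factorization =
      Finsupp.single p a + Finsupp.single q b := by
    rw [Nat.factorization_mul hpa hqb, Nat.Prime.factorization_pow hp, Nat.Prime.factorization_pow hq]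
  have hfp : (p ^ a * q ^ b).factorization p = a := by
    simp [hfact, Finsupp.single_apply, hpq, Ne.symm hpq]
  have hfq : (p ^ a * q ^ b).factorization q = b := by
    simp [hfact, Finsupp.single_apply, hpq, Ne.symm hpq]
  rw [numEntropy, hlen, hpf, Finset.sum_pair hpq, hfp, hfq]
  push_cast
  ring

lemma mul_log_convex_ineq (a b : ℝ) (ha : 0 ≤ a) (hb : 0 ≤ b) :
    (a + b) * Real.log ((a + b) / 2) ≤ a * Real.log a + b * Real.log b := by
  have h := Real.convexOn_mul_log.2 (Set.mem_Ici.2 ha) (Set.mem_Ici.2 hb)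
    (by norm_num : (0:ℝ) ≤ 1/2) (by norm_num : (0:ℝ) ≤ 1/2) (by norm_num)
  simp only [smul_eq_mul] at h
  have h2 : (1/2 : ℝ) * a + (1/2 : ℝ) * b = (a + b) / 2 := by ring
  rw [h2] at h
  linarith

theorem entropy_diff_le (p q α β ε : ℕ) (hp : p.Prime) (hq : q.Prime) (hpq : p ≠ q)
    (hα : 0 < α) (hβ : 0 < β) (hε : ε < β)
    (n m : ℕ) (hn : n = p ^ α * q ^ β) (hm : m = p ^ (α + ε) * q ^ (β - ε)) :
    numEntropy m - numEntropy n ≤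
      ((α : ℝ) * Real.log α + (β : ℝ) * Real.log β) / ((α : ℝ) + β) -
        Real.log (((α : ℝ) + β) / 2) := by
  subst hn hm
  have hbe : 0 < β - ε := Nat.sub_pos_of_lt hε
  rw [numEntropy_prime_pow_mul p q α β hp hq hpq hα hβ,
    numEntropy_prime_pow_mul p q (α + ε) (β - ε) hp hq hpq (by omega) hbe]
  have hcast : ((β - ε : ℕ) : ℝ) = (β : ℝ) - ε := by
    push_cast [Nat.cast_sub hε.le]; ring
  have hsum : ((α + ε : ℕ) : ℝ) + ((β - ε : ℕ) : ℝ) = (α : ℝ) + β := by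
    push_cast [hcast]; ring
  rw [hsum]
  have hA : (0 : ℝ) < (α : ℝ) + β := by positivity
  have key : ((α : ℝ) + β) * Real.log (((α : ℝ) + β) / 2) ≤
      ((α + ε : ℕ) : ℝ) * Real.log ((α + ε : ℕ) : ℝ) +
        ((β - ε : ℕ) : ℝ) * Real.log ((β - ε : ℕ) : ℝ) := by
    have := mul_log_convex_ineq ((α + ε : ℕ) : ℝ) ((β - ε : ℕ) : ℝ)
      (Nat.cast_nonneg _) (Nat.cast_nonneg _)
    rwa [hsum] at this
  rw [div_sub' hA.ne', le_div_iff₀ hA]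
  have h3 : (Real.log ((α:ℝ)+β) - 1 / ((α:ℝ)+β) * (((α + ε : ℕ):ℝ) * Real.log ((α + ε : ℕ):ℝ) +
        ((β - ε : ℕ):ℝ) * Real.log ((β - ε : ℕ):ℝ)) -
      (Real.log ((α:ℝ)+β) - 1 / ((α:ℝ)+β) * ((α:ℝ) * Real.log α + (β:ℝ) * Real.log β))) * ((α:ℝ)+β) =
      ((α:ℝ) * Real.log α + (β:ℝ) * Real.log β) - (((α + ε : ℕ):ℝ) * Real.log ((α + ε : ℕ):ℝ) +
        ((β - ε : ℕ):ℝ) * Real.log ((β - ε : ℕ):ℝ)) := by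
    field_simp
    ring
  rw [h3]
  linarith [key]
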